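/- arXiv:2107.01724 — 5 statements merged into one kernel-verified Lean document; each statement's English description precedes it below -/
import Mathlib

section
/- Let G ∈ ℝⁿˣᴺ be a matrix with columns g₁, …, g_N, let H ∈ ℝᴸˣⁿ, h ∈ ℝᴸ, c ∈ ℝⁿ, and let α ∈ ℝᴺ with α ≥ 0 componentwise. Then Hc + |HG| α ≤ h (componentwise, where |HG| is the entrywise absolute value of the matrix HG) if and only if for every θ ∈ ℝᴺ with |θᵢ| ≤ αᵢ for all i, one has H(c + Σᵢ₌₁ᴺ θᵢ gᵢ) ≤ h componentwise. -/
/-- `Hc + |HG| α ≤ h` iff for every `θ` with `|θᵢ| ≤ αᵢ`, `H(c + ∑ᵢ θᵢ gᵢ) ≤ h`,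
where `gᵢ` is the `i`-th column of `G`. -/
theorem stmt_8 {n N L : ℕ} (G : Matrix (Fin n) (Fin N) ℝ) (H : Matrix (Fin L) (Fin n) ℝ)
    (h : Fin L → ℝ) (c : Fin n → ℝ) (α : Fin N → ℝ) (hα : 0 ≤ α) :
    H.mulVec c + ((H * G).map (fun a => |a|)).mulVec α ≤ h ↔
      ∀ θ : Fin N → ℝ, (∀ i, |θ i| ≤ α i) →
        H.mulVec (c + ∑ i, θ i • (fun r => G r i)) ≤ h := by
  have key : ∀ (θ : Fin N → ℝ) (l : Fin L),
      H.mulVec (c + ∑ i, θ i • (fun r => G r i)) l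
        = H.mulVec c l + ∑ i, (H * G) l i * θ i := by
    intro θ l
    simp only [Matrix.mulVec, Matrix.mul_apply, dotProduct, Pi.add_apply,
      Finset.sum_apply, Pi.smul_apply, smul_eq_mul, mul_add, Finset.mul_sum, dotProduct,
      Finset.sum_add_distrib, Finset.sum_mul]
    congr 1
    rw [Finset.sum_comm]
    apply Finset.sum_congr rfl
    intro i _
    apply Finset.sum_congr rfl
    intro k _
    ring
  have abs_eq : ∀ l, ((H * G).map (fun a => |a|)).mulVec α l
      = ∑ i, |(H * G) l i| * α i := by
    intro l
    simp [Matrix.mulVec, dotProduct, Matrix.map_apply]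
  constructor
  · intro hle θ hθ l
    rw [key]
    have hsum : ∑ i, (H * G) l i * θ i ≤ ∑ i, |(H * G) l i| * α i := by
      apply Finset.sum_le_sum
      intro i _
      calc (H * G) l i * θ i ≤ |(H * G) l i * θ i| := le_abs_self _
        _ = |(H * G) l i| * |θ i| := abs_mul _ _
        _ ≤ |(H * G) l i| * α i :=
          mul_le_mul_of_nonneg_left (hθ i) (abs_nonneg _)
    have := hle l
    rw [Pi.add_apply, abs_eq] at this
    linarith
  · intro hall l
    set θ : Fin N → ℝ := fun i => α i * Real.sign ((H * G) l i) with hθdef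
    have hθ : ∀ i, |θ i| ≤ α i := by
      intro i
      rw [hθdef, abs_mul, abs_of_nonneg (hα i)]
      have : |Real.sign ((H * G) l i)| ≤ 1 := by
        rcases Real.sign_apply_eq ((H * G) l i) with h1 | h1 | h1 <;>
          rw [h1] <;> norm_num
      calc α i * |Real.sign ((H * G) l i)| ≤ α i * 1 :=
            mul_le_mul_of_nonneg_left this (hα i)
        _ = α i := mul_one _
    have hmain := hall θ hθ l
    rw [key] at hmain
    have heq : ∑ i, (H * G) l i * θ i = ∑ i, |(H * G) l i| * α i := by
      apply Finset.sum_congr rfl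
      intro i _
      show (H * G) l i * (α i * Real.sign ((H * G) l i)) = |(H * G) l i| * α i
      rcases lt_trichotomy ((H * G) l i) 0 with h1 | h1 | h1
      · rw [Real.sign_of_neg h1, abs_of_neg h1]; ring
      · simp [h1]
      · rw [Real.sign_of_pos h1, abs_of_pos h1]; ring
    rw [Pi.add_apply, abs_eq]
    linarith [hmain, heq ▸ hmain]
end

section
/- Let G ∈ ℝⁿˣᴺ be a matrix with columns g₁, …, g_N, let H ∈ ℝᴸˣⁿ, h ∈ ℝᴸ, c ∈ ℝⁿ, and let α ∈ ℝᴺ with 0 ≤ αᵢ ≤ 1 for all i. If Hc + |HG| α ≤ h componentwise (where |HG| is the entrywise absolute value of HG), then the zonotope with generators α₁ g₁, …, α_N g_N and center c is contained in the polyhedron {x ∈ ℝⁿ | Hx ≤ h}. -/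
/-- The zonotope with generators `g 1, …, g N` and center `c`. -/
def zonotope {n N : ℕ} (g : Fin N → (Fin n → ℝ)) (c : Fin n → ℝ) : Set (Fin n → ℝ) :=
  {x | ∃ θ : Fin N → ℝ, (∀ i, θ i ∈ Set.Icc (-1 : ℝ) 1) ∧ x = c + ∑ i, θ i • g i}

/-- If `Hc + |HG| α ≤ h` with `0 ≤ αᵢ ≤ 1`, then the zonotope with generators `αᵢ gᵢ`
(`gᵢ` the columns of `G`) and center `c` is contained in the polyhedron `{x | Hx ≤ h}`. -/
theorem stmt_9 {n N L : ℕ} (G : Matrix (Fin n) (Fin N) ℝ) (H : Matrix (Fin L) (Fin n) ℝ)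
    (h : Fin L → ℝ) (c : Fin n → ℝ) (α : Fin N → ℝ) (hα : ∀ i, α i ∈ Set.Icc (0 : ℝ) 1)
    (hineq : H.mulVec c + ((H * G).map (fun a => |a|)).mulVec α ≤ h) :
    zonotope (fun i => α i • (fun r => G r i)) c ⊆ {x | H.mulVec x ≤ h} := by
  rintro x ⟨θ, hθ, rfl⟩ j
  refine le_trans ?_ (hineq j)
  simp only [Pi.add_apply, Matrix.mulVec, dotProduct, Matrix.map_apply,
    Pi.smul_apply, Finset.sum_apply, smul_eq_mul]
  have expand : ∑ x, H j x * (c x + ∑ i, θ i * (α i * G x i))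
      = ∑ x, H j x * c x + ∑ i, θ i * α i * (H * G) j i := by
    simp only [mul_add, Finset.sum_add_distrib, Finset.mul_sum, Matrix.mul_apply]
    congr 1
    rw [Finset.sum_comm]
    congr 1; ext i; congr 1; ext r; ring
  rw [expand]
  gcongr _ + ?_
  refine Finset.sum_le_sum fun i _ => ?_
  obtain ⟨h0, h1⟩ := hα i
  obtain ⟨hm1, hp1⟩ := hθ i
  calc θ i * α i * (H * G) j i ≤ |θ i * α i * (H * G) j i| := le_abs_self _
    _ = |θ i| * α i * |(H * G) j i| := by rw [abs_mul, abs_mul, abs_of_nonneg h0]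
    _ ≤ 1 * α i * |(H * G) j i| := by
        gcongr
        exact abs_le.mpr ⟨hm1, hp1⟩
    _ = |(H * G) j i| * α i := by ring
end

section
/- Let Z be the zonotope with generators g₁, …, g_N ∈ ℝⁿ and center c ∈ ℝⁿ, and let Z' be the zonotope with generators α₁ g₁, …, α_N g_N and center c' ∈ ℝⁿ, where αᵢ ∈ [0,1] for all i (i.e., Z' is aligned with Z). Then the Minkowski difference Z ⊖ Z' equals the zonotope with generators (1−α₁) g₁, …, (1−α_N) g_N and center c − c'. -/
/-- Minkowski difference: `X ⊖ Y = {z | ∀ y ∈ Y, z + y ∈ X}`. -/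
def mdiff {n : ℕ} (X Y : Set (Fin n → ℝ)) : Set (Fin n → ℝ) :=
  {z | ∀ y ∈ Y, z + y ∈ X}

lemma zonotope_convex {n N : ℕ} (g : Fin N → (Fin n → ℝ)) (c : Fin n → ℝ) :
    Convex ℝ (zonotope g c) := by
  rintro x ⟨θ, hθ, rfl⟩ y ⟨φ, hφ, rfl⟩ a b ha hb hab
  refine ⟨fun i => a * θ i + b * φ i, fun i => ?_, ?_⟩
  · obtain ⟨h1, h2⟩ := hθ i
    obtain ⟨h3, h4⟩ := hφ i
    constructor
    · show -1 ≤ a * θ i + b * φ i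
      nlinarith
    · show a * θ i + b * φ i ≤ 1
      nlinarith
  · have key : ∀ i : Fin N, (a * θ i + b * φ i) • g i = a • (θ i • g i) + b • (φ i • g i) := by
      intro i; rw [add_smul, smul_smul, smul_smul]
    calc a • (c + ∑ i, θ i • g i) + b • (c + ∑ i, φ i • g i)
        = (a + b) • c + ∑ i, (a • (θ i • g i) + b • (φ i • g i)) := by
          rw [smul_add, smul_add, Finset.smul_sum, Finset.smul_sum, add_smul,
            Finset.sum_add_distrib]
          abel
      _ = c + ∑ i, (fun i => a * θ i + b * φ i) i • g i := by
          rw [hab, one_smul]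
          congr 1
          exact Finset.sum_congr rfl fun i _ => (key i).symm

lemma zonotope_closed {n N : ℕ} (g : Fin N → (Fin n → ℝ)) (c : Fin n → ℝ) :
    IsClosed (zonotope g c) := by
  have h : zonotope g c =
      (fun θ : Fin N → ℝ => c + ∑ i, θ i • g i) '' (Set.univ.pi fun _ => Set.Icc (-1 : ℝ) 1) := by
    ext x
    simp only [zonotope, Set.mem_setOf_eq, Set.mem_image, Set.mem_pi, Set.mem_univ, true_implies]
    constructor
    · rintro ⟨θ, h1, rfl⟩; exact ⟨θ, h1, rfl⟩
    · rintro ⟨θ, h1, rfl⟩; exact ⟨θ, h1, rfl⟩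
  rw [h]
  refine ((isCompact_univ_pi fun _ => isCompact_Icc).image ?_).isClosed
  exact continuous_const.add (continuous_finset_sum _ fun i _ =>
    ((continuous_apply i).smul continuous_const))

/-- Minkowski difference of a zonotope and an aligned zonotope amounts to
generator-wise subtraction. -/
theorem stmt_10 {n N : ℕ} (g : Fin N → (Fin n → ℝ)) (c c' : Fin n → ℝ)
    (α : Fin N → ℝ) (hα : ∀ i, α i ∈ Set.Icc (0 : ℝ) 1) :
    mdiff (zonotope g c) (zonotope (fun i => α i • g i) c')
      = zonotope (fun i => (1 - α i) • g i) (c - c') := by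
  ext z
  constructor
  · intro hz
    by_contra hzmem
    obtain ⟨f, u, hfu, huz⟩ := geometric_hahn_banach_closed_point
      (zonotope_convex _ _) (zonotope_closed (fun i => (1 - α i) • g i) (c - c')) hzmem
    set sgn : Fin N → ℝ := fun i => if 0 ≤ f (g i) then 1 else -1 with hsgn
    have hsgn_mem : ∀ i, sgn i ∈ Set.Icc (-1 : ℝ) 1 := by
      intro i
      simp only [hsgn]
      split_ifs <;> norm_num
    have hy : c' + ∑ i, sgn i • (α i • g i) ∈ zonotope (fun i => α i • g i) c' :=
      ⟨sgn, hsgn_mem, rfl⟩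
    obtain ⟨ψ, hψ, heq⟩ := hz _ hy
    have hp : (c - c') + ∑ i, sgn i • ((1 - α i) • g i)
        ∈ zonotope (fun i => (1 - α i) • g i) (c - c') := ⟨sgn, hsgn_mem, rfl⟩
    have hfp := hfu _ hp
    -- compute f z and f p
    have hfz : f z = f c + ∑ i, ψ i * f (g i) - f c' - ∑ i, sgn i * (α i * f (g i)) := by
      have : f (z + (c' + ∑ i, sgn i • (α i • g i))) = f (c + ∑ i, ψ i • g i) := by rw [← heq]
      simp only [map_add, map_sum, map_smul, smul_eq_mul] at this
      linarith
    have hfp' : f ((c - c') + ∑ i, sgn i • ((1 - α i) • g i))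
        = f c - f c' + ∑ i, sgn i * ((1 - α i) * f (g i)) := by
      simp only [map_add, map_sub, map_sum, map_smul, smul_eq_mul]
    have key : ∑ i, ψ i * f (g i) ≤ ∑ i, sgn i * f (g i) := by
      refine Finset.sum_le_sum fun i _ => ?_
      obtain ⟨h1, h2⟩ := hψ i
      simp only [hsgn]
      split_ifs with h
      · nlinarith
      · nlinarith [le_of_not_ge h]
    have : f z ≤ f ((c - c') + ∑ i, sgn i • ((1 - α i) • g i)) := by
      rw [hfz, hfp']
      have : ∑ i, sgn i * ((1 - α i) * f (g i))
          = ∑ i, sgn i * f (g i) - ∑ i, sgn i * (α i * f (g i)) := by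
        rw [← Finset.sum_sub_distrib]
        refine Finset.sum_congr rfl fun i _ => ?_
        ring
      rw [this]
      linarith
    linarith
  · rintro ⟨θ, hθ, rfl⟩ y ⟨φ, hφ, rfl⟩
    refine ⟨fun i => θ i * (1 - α i) + φ i * α i, fun i => ?_, ?_⟩
    · obtain ⟨h1, h2⟩ := hθ i
      obtain ⟨h3, h4⟩ := hφ i
      obtain ⟨h5, h6⟩ := hα i
      constructor
      · show -1 ≤ θ i * (1 - α i) + φ i * α i
        nlinarith
      · show θ i * (1 - α i) + φ i * α i ≤ 1
        nlinarith
    · have : ∀ i, (θ i * (1 - α i) + φ i * α i) • g i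
          = θ i • ((1 - α i) • g i) + φ i • (α i • g i) := by
        intro i
        rw [add_smul, smul_smul, smul_smul]
      rw [Finset.sum_congr rfl fun i _ => this i, Finset.sum_add_distrib]
      abel
end

section
/- Let A be a linear map from ℝⁿˣ to ℝⁿˣ, B a linear map from ℝⁿᵘ to ℝⁿˣ, E a linear map from ℝⁿʷ to ℝⁿˣ, K ∈ ℝⁿˣ, and let U ⊆ ℝⁿᵘ, W ⊆ ℝⁿʷ and X ⊆ ℝⁿˣ be sets with W nonempty. Then {x ∈ ℝⁿˣ | ∃ u ∈ U, ∀ w ∈ W, Ax + Bu + Ew + K ∈ X} = {x ∈ ℝⁿˣ | Ax ∈ ((X ⊖ E·W) ⊕ (−B)·U) + (−K)}, where E·W = {Ew | w ∈ W}, (−B)·U = {−Bu | u ∈ U}, ⊕ is Minkowski sum, ⊖ is Minkowski difference, and S + v denotes the translate of a set S by a vector v. -/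
open Pointwise

/-- The one-step backward reachable set rewritten via Minkowski arithmetic:
`{x | ∃ u ∈ U, ∀ w ∈ W, Ax + Bu + Ew + K ∈ X} = {x | Ax ∈ (X ⊖ E·W) ⊕ (−B)·U + (−K)}`. -/
theorem stmt_13 {nx nu nw : ℕ}
    (A : (Fin nx → ℝ) →ₗ[ℝ] (Fin nx → ℝ)) (B : (Fin nu → ℝ) →ₗ[ℝ] (Fin nx → ℝ))
    (E : (Fin nw → ℝ) →ₗ[ℝ] (Fin nx → ℝ)) (K : Fin nx → ℝ)
    (U : Set (Fin nu → ℝ)) (W : Set (Fin nw → ℝ)) (X : Set (Fin nx → ℝ))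
    (hW : W.Nonempty) :
    {x : Fin nx → ℝ | ∃ u ∈ U, ∀ w ∈ W, A x + B u + E w + K ∈ X}
      = {x : Fin nx → ℝ | A x ∈ (mdiff X (⇑E '' W) + ⇑(-B) '' U) + {-K}} := by
  ext x
  simp only [Set.mem_setOf_eq, Set.add_singleton, Set.mem_image, Set.mem_add, mdiff]
  constructor
  · rintro ⟨u, hu, h⟩
    refine ⟨A x + K, ⟨A x + B u + K, fun y ⟨w, hw, hy⟩ => ?_,
      (-B) u, ⟨u, hu, rfl⟩, by simp only [LinearMap.neg_apply]; abel⟩,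
      by abel⟩
    rw [← hy]
    have := h w hw
    have e : A x + B u + K + E w = A x + B u + E w + K := by abel
    rwa [e]
  · rintro ⟨p, ⟨z, hz, b, ⟨u, hu, hb⟩, hp⟩, heq⟩
    refine ⟨u, hu, fun w hw => ?_⟩
    have := hz (E w) ⟨w, hw, rfl⟩
    have e : A x + B u + E w + K = z + E w := by
      rw [← heq, ← hp, ← hb]; simp; abel
    rwa [e]
end

section
/- Let A be an invertible linear map from ℝⁿˣ to ℝⁿˣ, B a linear map from ℝⁿᵘ to ℝⁿˣ, E a linear map from ℝⁿʷ to ℝⁿˣ, K ∈ ℝⁿˣ, and let U ⊆ ℝⁿᵘ, W ⊆ ℝⁿʷ be sets with W nonempty. Define the backward reachable sets X₀ = Z₀ and X_{k+1} = {x ∈ ℝⁿˣ | ∃ u ∈ U, ∀ w ∈ W, Ax + Bu + Ew + K ∈ X_k} for a set Z₀ ⊆ ℝⁿˣ. Suppose (Ŵ_k)_{k≥0} and (W̌_k)_{k≥0} are sequences of sets in ℝⁿˣ with W̌_k ⊆ E·W ⊆ Ŵ_k for all k, and define Z̲₀ = Z̄₀ = Z₀, Z̲_{k+1} = A⁻¹·(((Z̲_k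 ⊖ Ŵ_k) ⊕ (−B)·U) + (−K)) and Z̄_{k+1} = A⁻¹·(((Z̄_k ⊖ W̌_k) ⊕ (−B)·U) + (−K)). Then Z̲_k ⊆ X_k ⊆ Z̄_k for all k ≥ 0. -/
open Pointwise

/-- Zonotopic-style under/over-approximation of backward reachable sets: if
`W̌ₖ ⊆ E·W ⊆ Ŵₖ` and the sequences `Z̲`, `Z̄` follow the recursions
`Z̲ₖ₊₁ = A⁻¹·((Z̲ₖ ⊖ Ŵₖ) ⊕ (−B)·U + (−K))`, `Z̄ₖ₊₁ = A⁻¹·((Z̄ₖ ⊖ W̌ₖ) ⊕ (−B)·U + (−K))`,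
then `Z̲ₖ ⊆ Xₖ ⊆ Z̄ₖ` for all `k`. -/
theorem stmt_14 {nx nu nw : ℕ}
    (A : (Fin nx → ℝ) ≃ₗ[ℝ] (Fin nx → ℝ)) (B : (Fin nu → ℝ) →ₗ[ℝ] (Fin nx → ℝ))
    (E : (Fin nw → ℝ) →ₗ[ℝ] (Fin nx → ℝ)) (K : Fin nx → ℝ)
    (U : Set (Fin nu → ℝ)) (W : Set (Fin nw → ℝ)) (hW : W.Nonempty)
    (Z₀ : Set (Fin nx → ℝ))
    (X : ℕ → Set (Fin nx → ℝ))
    (hX0 : X 0 = Z₀)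
    (hX : ∀ k, X (k + 1) = {x : Fin nx → ℝ | ∃ u ∈ U, ∀ w ∈ W, A x + B u + E w + K ∈ X k})
    (What Wcheck : ℕ → Set (Fin nx → ℝ))
    (hWlo : ∀ k, Wcheck k ⊆ ⇑E '' W) (hWhi : ∀ k, ⇑E '' W ⊆ What k)
    (Zlo Zhi : ℕ → Set (Fin nx → ℝ))
    (hZlo0 : Zlo 0 = Z₀) (hZhi0 : Zhi 0 = Z₀)
    (hZlo : ∀ k, Zlo (k + 1) = ⇑A.symm '' ((mdiff (Zlo k) (What k) + ⇑(-B) '' U) + {-K}))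
    (hZhi : ∀ k, Zhi (k + 1) = ⇑A.symm '' ((mdiff (Zhi k) (Wcheck k) + ⇑(-B) '' U) + {-K})) :
    ∀ k, Zlo k ⊆ X k ∧ X k ⊆ Zhi k := by
  intro k
  induction k with
  | zero => simp [hX0, hZlo0, hZhi0]
  | succ k ih =>
    obtain ⟨ih1, ih2⟩ := ih
    constructor
    · rw [hZlo k, hX k]
      rintro x ⟨y, ⟨zu, ⟨z, hz, bu, ⟨u, hu, rfl⟩, rfl⟩, k', hk', rfl⟩, rfl⟩
      refine ⟨u, hu, fun w hw => ?_⟩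
      have hmem := ih1 (hz (E w) (hWhi k ⟨w, hw, rfl⟩))
      have hk'' : k' = -K := hk'
      subst hk''
      show A (A.symm (z + (-B) u + -K)) + B u + E w + K ∈ X k
      rw [A.apply_symm_apply, LinearMap.neg_apply]
      have heq : z + -B u + -K + B u + E w + K = z + E w := by abel
      rw [heq]; exact hmem
    · rw [hZhi k, hX k]
      rintro x ⟨u, hu, hx⟩
      set z : Fin nx → ℝ := A x + B u + K with hzdef
      have hz : z ∈ mdiff (Zhi k) (Wcheck k) := by
        intro y hy
        obtain ⟨w, hw, rfl⟩ := hWlo k hy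
        have heq : z + E w = A x + B u + E w + K := by rw [hzdef]; abel
        rw [heq]; exact ih2 (hx w hw)
      refine ⟨z + (-B) u + -K, Set.add_mem_add (Set.add_mem_add hz ⟨u, hu, rfl⟩) rfl, ?_⟩
      have heq : z + (-B) u + -K = A x := by rw [hzdef, LinearMap.neg_apply]; abel
      rw [heq, A.symm_apply_apply]
end
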